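/- Let X and Y be Polish spaces, let ν and σ be Borel probability measures on X and Y respectively, and let c : X × Y → ℝ be a continuous and bounded cost function. Then there exists an optimal transport plan: a probability measure π₀ on X × Y with first marginal ν and second marginal σ such that ∫ c dπ₀ = inf_{π ∈ Π(ν,σ)} ∫ c dπ. -/

import Mathlib

open MeasureTheory Filter Set Topology TopologicalSpace Metric
open scoped ENNReal NNReal


/-- Tightness of probability measures on complete separable metric spaces. -/
lemma stmt6_exists_isCompact_measure_compl_le {X : Type*} [MetricSpace X] [CompleteSpace X]
    [SecondCountableTopology X] [Nonempty X] [MeasurableSpace X] [OpensMeasurableSpace X]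
    (μ : Measure X) [IsProbabilityMeasure μ] {ε : ℝ≥0∞} (hε : 0 < ε) :
    ∃ K : Set X, IsCompact K ∧ μ Kᶜ ≤ ε := by
  obtain ⟨u, hu⟩ := TopologicalSpace.exists_dense_seq X
  have key : ∀ m : ℕ, ∃ N : ℕ,
      μ (⋃ i ∈ Finset.range N, closedBall (u i) (1/(m+1)))ᶜ ≤ ε * 2⁻¹ ^ (m+1) := by
    intro m
    set T : ℕ → Set X := fun N => ⋃ i ∈ Finset.range N, closedBall (u i) (1/(m+1)) with hT
    have hmono : Monotone T := by
      intro a b hab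
      exact Set.biUnion_subset_biUnion_left (by exact_mod_cast Finset.range_subset_range.2 hab)
    have hclosed : ∀ N, IsClosed (T N) := fun N =>
      isClosed_biUnion_finset fun i _ => Metric.isClosed_closedBall
    have hunion : (⋃ N, T N) = univ := by
      refine eq_univ_of_forall fun x => ?_
      have hpos : (0:ℝ) < 1/(m+1) := by positivity
      obtain ⟨i, hi⟩ : ∃ i, dist (u i) x < 1/(m+1) := by
        have := hu.exists_dist_lt x hpos
        simpa [dist_comm] using this
      refine mem_iUnion.2 ⟨i+1, ?_⟩
      refine Set.mem_biUnion (Finset.self_mem_range_succ i) ?_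
      exact mem_closedBall.2 (by rw [dist_comm]; exact hi.le)
    have hlim : Tendsto (fun N => μ (T N)) atTop (𝓝 1) := by
      have h2 := tendsto_measure_iUnion_atTop (μ := μ) hmono
      rw [hunion, measure_univ] at h2
      exact h2
    have hlimc : Tendsto (fun N => μ (T N)ᶜ) atTop (𝓝 0) := by
      have hcont : Tendsto (fun N => 1 - μ (T N)) atTop (𝓝 (1 - 1)) :=
        ((ENNReal.continuous_sub_left ENNReal.one_ne_top).tendsto 1).comp hlim
      simp only [tsub_self] at hcont
      refine hcont.congr fun N => ?_
      rw [prob_compl_eq_one_sub ((hclosed N).measurableSet)]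
    have hRpos : (0:ℝ≥0∞) < ε * 2⁻¹ ^ (m+1) := by
      apply ENNReal.mul_pos hε.ne'
      exact (ENNReal.pow_pos (by simp) _).ne'
    exact (hlimc.eventually_lt_const hRpos).exists.imp (fun N h => h.le)
  choose N hN using key
  refine ⟨⋂ m, ⋃ i ∈ Finset.range (N m), closedBall (u i) (1/(m+1)), ?_, ?_⟩
  · apply TotallyBounded.isCompact_of_isClosed
    · rw [Metric.totallyBounded_iff]
      intro δ hδ
      obtain ⟨m, hm⟩ : ∃ m : ℕ, 1/(m+1) < δ := exists_nat_one_div_lt hδ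
      classical
      refine ⟨↑((Finset.range (N m)).image u), Finset.finite_toSet _, ?_⟩
      intro x hx
      have hx' : x ∈ ⋃ i ∈ Finset.range (N m), closedBall (u i) (1/(m+1)) :=
        Set.mem_iInter.1 hx m
      obtain ⟨i, hi, hxi⟩ := Set.mem_iUnion₂.1 hx'
      exact Set.mem_biUnion (Finset.mem_coe.2 (Finset.mem_image_of_mem u hi))
        (mem_ball.2 (lt_of_le_of_lt (mem_closedBall.1 hxi) hm))
    · exact isClosed_iInter fun m => isClosed_biUnion_finset fun i _ => Metric.isClosed_closedBall
  · rw [Set.compl_iInter]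
    refine (measure_iUnion_le _).trans ?_
    refine (ENNReal.tsum_le_tsum fun m => hN m).trans ?_
    rw [ENNReal.tsum_mul_left]
    have hsum : (∑' m : ℕ, (2⁻¹ : ℝ≥0∞) ^ (m+1)) = 1 := by
      rw [show (fun m : ℕ => (2⁻¹ : ℝ≥0∞) ^ (m+1)) = fun m : ℕ => 2⁻¹ ^ m * 2⁻¹ by
        funext m; rw [pow_succ]]
      rw [ENNReal.tsum_mul_right, ENNReal.tsum_geometric]
      rw [show (1 : ℝ≥0∞) - 2⁻¹ = 2⁻¹ by
        rw [ENNReal.one_sub_inv_two]]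
      rw [inv_inv]
      exact ENNReal.mul_inv_cancel (by norm_num) (by norm_num)
    rw [hsum, mul_one]



lemma stmt6_eq_of_nullFrontier {X : Type*} [MetricSpace X] [MeasurableSpace X] [BorelSpace X]
    {ρ ν : Measure X} [IsProbabilityMeasure ρ] [IsProbabilityMeasure ν]
    (h : ∀ A : Set X, MeasurableSet A → ρ (frontier A) = 0 → ρ A = ν A) : ρ = ν := by
  refine ext_of_generate_finite {s : Set X | IsClosed s} ?_ ?_ ?_ (by simp)
  · rw [BorelSpace.measurable_eq (α := X), borel_eq_generateFrom_isClosed]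
  · exact fun s hs t ht _ => hs.inter ht
  · intro F hF
    obtain ⟨rs, hrs0, hrs⟩ := exists_null_frontiers_thickening ρ F
    have h1 : ∀ n, ρ (thickening (rs n) F) = ν (thickening (rs n) F) := fun n =>
      h _ isOpen_thickening.measurableSet (hrs n).2
    have hrs' : Tendsto rs atTop (𝓝[>] 0) :=
      tendsto_nhdsWithin_of_tendsto_nhds_of_eventually_within rs hrs0
        (Eventually.of_forall fun n => (hrs n).1)
    have h2 : Tendsto (fun n => ρ (thickening (rs n) F)) atTop (𝓝 (ρ F)) :=
      (tendsto_measure_thickening_of_isClosed ⟨1, one_pos, measure_ne_top _ _⟩ hF).comp hrs'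
    have h3 : Tendsto (fun n => ν (thickening (rs n) F)) atTop (𝓝 (ν F)) :=
      (tendsto_measure_thickening_of_isClosed ⟨1, one_pos, measure_ne_top _ _⟩ hF).comp hrs'
    have h2' : Tendsto (fun n => ν (thickening (rs n) F)) atTop (𝓝 (ρ F)) := by
      simpa only [h1] using h2
    exact tendsto_nhds_unique h2' h3


/-- Existence of an optimal transport plan: for Borel probability measures `ν, σ` on
Polish spaces `X, Y` and a continuous bounded cost `c : X × Y → ℝ`, there exists
`π₀ ∈ Π(ν,σ)` minimizing `∫ c dπ` over all `π ∈ Π(ν,σ)`. -/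
theorem stmt_6 {X Y : Type*}
    [TopologicalSpace X] [PolishSpace X] [MeasurableSpace X] [BorelSpace X]
    [TopologicalSpace Y] [PolishSpace Y] [MeasurableSpace Y] [BorelSpace Y]
    (ν : Measure X) (σ : Measure Y)
    [IsProbabilityMeasure ν] [IsProbabilityMeasure σ]
    (c : X × Y → ℝ) (hc : Continuous c) (M : ℝ) (hM : ∀ q, |c q| ≤ M) :
    ∃ π₀ : Measure (X × Y), IsProbabilityMeasure π₀ ∧ π₀.fst = ν ∧ π₀.snd = σ ∧
      ∀ π : Measure (X × Y), IsProbabilityMeasure π → π.fst = ν → π.snd = σ →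
        (∫ q, c q ∂π₀) ≤ ∫ q, c q ∂π := by
  classical
  letI := upgradeIsCompletelyMetrizable X
  letI := upgradeIsCompletelyMetrizable Y
  have hXne : Nonempty X := by
    by_contra hne
    rw [not_nonempty_iff] at hne
    have h0 : ν univ = 0 := by simp [Set.univ_eq_empty_iff.2 hne]
    rw [measure_univ] at h0
    exact one_ne_zero h0
  have hYne : Nonempty Y := by
    by_contra hne
    rw [not_nonempty_iff] at hne
    have h0 : σ univ = 0 := by simp [Set.univ_eq_empty_iff.2 hne]
    rw [measure_univ] at h0
    exact one_ne_zero h0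
  have hZne : Nonempty (X × Y) := ⟨(Classical.arbitrary X, Classical.arbitrary Y)⟩
  have hM0 : 0 ≤ M := le_trans (abs_nonneg _) (hM (Classical.arbitrary _))
  have hcm : Measurable c := hc.measurable
  have hint : ∀ (π : Measure (X × Y)), IsProbabilityMeasure π → Integrable c π := by
    intro π hπ
    exact (integrable_const M).mono' hc.aestronglyMeasurable (Eventually.of_forall hM)
  have hlb : ∀ (π : Measure (X × Y)), IsProbabilityMeasure π → -M ≤ ∫ q, c q ∂π := by
    intro π hπ
    have h1 : ∫ _q, (-M : ℝ) ∂π ≤ ∫ q, c q ∂π := by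
      apply integral_mono (integrable_const _) (hint π hπ)
      intro q; exact (abs_le.1 (hM q)).1
    simpa [measure_univ] using h1
  set S : Set ℝ := {r | ∃ π : Measure (X × Y),
      IsProbabilityMeasure π ∧ π.fst = ν ∧ π.snd = σ ∧ r = ∫ q, c q ∂π} with hS
  have hmemS : ∀ (π : Measure (X × Y)), IsProbabilityMeasure π → π.fst = ν → π.snd = σ →
      (∫ q, c q ∂π) ∈ S := fun π h h1 h2 => ⟨π, h, h1, h2, rfl⟩
  have hSne : S.Nonempty :=
    ⟨∫ q, c q ∂(ν.prod σ), hmemS _ inferInstance Measure.fst_prod Measure.snd_prod⟩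
  have hSbdd : BddBelow S := by
    refine ⟨-M, fun r hr => ?_⟩
    obtain ⟨π, hπ, -, -, rfl⟩ := hr
    exact hlb π hπ
  set I := sInf S with hI
  have hseq : ∀ n : ℕ, ∃ π : Measure (X × Y), IsProbabilityMeasure π ∧ π.fst = ν ∧
      π.snd = σ ∧ ∫ q, c q ∂π < I + 1/(n+1) := by
    intro n
    have hlt : I < I + 1/(n+1 : ℝ) := lt_add_of_pos_right _ (by positivity)
    obtain ⟨r, hrS, hr⟩ := exists_lt_of_csInf_lt hSne hlt
    obtain ⟨π, hπ, h1, h2, rfl⟩ := hrS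
    exact ⟨π, hπ, h1, h2, hr⟩
  choose π hπp hπf hπs hπlt using hseq
  haveI : ∀ n, IsProbabilityMeasure (π n) := hπp
  have hIle' : ∀ n, I ≤ ∫ q, c q ∂(π n) := fun n =>
    csInf_le hSbdd (hmemS _ (hπp n) (hπf n) (hπs n))
  have hIlim : Tendsto (fun n => ∫ q, c q ∂(π n)) atTop (𝓝 I) := by
    have h0 : Tendsto (fun n : ℕ => I + 1/(n+1 : ℝ)) atTop (𝓝 (I + 0)) :=
      tendsto_const_nhds.add tendsto_one_div_add_atTop_nhds_zero_nat
    rw [add_zero] at h0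
    exact tendsto_of_tendsto_of_tendsto_of_le_of_le tendsto_const_nhds h0 hIle'
      (fun n => (hπlt n).le)
  -- ultrafilter limit of the sequence of measures, as a set function
  set U : Ultrafilter ℕ := Ultrafilter.of atTop with hU
  have hUle : (U : Filter ℕ) ≤ atTop := Ultrafilter.of_le _
  set A : Set (X × Y) → ℝ≥0∞ := fun s => (U.map (fun n => π n s)).lim with hAdef
  have hA : ∀ s, Tendsto (fun n => π n s) U (𝓝 (A s)) := by
    intro s
    have := (U.map (fun n => π n s)).le_nhds_lim
    rwa [Ultrafilter.coe_map] at this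
  have hAuniv : A univ = 1 := by
    refine tendsto_nhds_unique (hA univ) ?_
    simpa [measure_univ] using (tendsto_const_nhds : Tendsto (fun _ : ℕ => (1:ℝ≥0∞)) U (𝓝 1))
  have hAmono : ∀ {s t : Set (X × Y)}, s ⊆ t → A s ≤ A t := fun {s t} hst =>
    le_of_tendsto_of_tendsto' (hA s) (hA t) fun n => measure_mono hst
  have hAle1 : ∀ s, A s ≤ 1 := fun s => le_trans (hAmono (subset_univ s)) hAuniv.le
  have hAne : ∀ s, A s ≠ ∞ := fun s => ((hAle1 s).trans_lt ENNReal.one_lt_top).ne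
  have hAunion : ∀ s t, A (s ∪ t) ≤ A s + A t := fun s t =>
    le_of_tendsto_of_tendsto' (hA _) ((hA s).add (hA t)) fun n => measure_union_le _ _
  have hAadd : ∀ s t, Disjoint s t → MeasurableSet t → A (s ∪ t) = A s + A t := by
    intro s t hd ht
    refine tendsto_nhds_unique (hA _) (((hA s).add (hA t)).congr fun n => ?_)
    exact (measure_union hd ht).symm
  -- the outer content on arbitrary sets
  set B : Set (X × Y) → ℝ≥0∞ :=
    fun K => ⨅ G : {G : Set (X × Y) // IsOpen G ∧ K ⊆ G}, A G.1 with hBdef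
  have hBle : ∀ K G, IsOpen G → K ⊆ G → B K ≤ A G := fun K G hG hKG =>
    iInf_le (fun G : {G : Set (X × Y) // IsOpen G ∧ K ⊆ G} => A G.1) ⟨G, hG, hKG⟩
  have hBuniv : ∀ K, B K ≤ 1 := fun K =>
    (hBle K univ isOpen_univ (subset_univ K)).trans hAuniv.le
  have hBne : ∀ K, B K ≠ ∞ := fun K => ((hBuniv K).trans_lt ENNReal.one_lt_top).ne
  have hBmono : ∀ K₁ K₂ : Set (X × Y), K₁ ⊆ K₂ → B K₁ ≤ B K₂ := fun K₁ K₂ h =>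
    le_iInf fun G => hBle _ _ G.2.1 (h.trans G.2.2)
  have hBsub : ∀ K₁ K₂ : Set (X × Y), B (K₁ ∪ K₂) ≤ B K₁ + B K₂ := by
    intro K₁ K₂
    refine ENNReal.le_of_forall_pos_le_add fun ε hε _hfin => ?_
    have hε2 : (0:ℝ≥0∞) < ε/2 :=
      ENNReal.div_pos (by exact_mod_cast hε.ne') ENNReal.ofNat_ne_top
    obtain ⟨G₁, hG₁⟩ : ∃ G : {G : Set (X × Y) // IsOpen G ∧ K₁ ⊆ G}, A G.1 < B K₁ + ε/2 :=
      iInf_lt_iff.1 (ENNReal.lt_add_right (hBne K₁) hε2.ne')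
    obtain ⟨G₂, hG₂⟩ : ∃ G : {G : Set (X × Y) // IsOpen G ∧ K₂ ⊆ G}, A G.1 < B K₂ + ε/2 :=
      iInf_lt_iff.1 (ENNReal.lt_add_right (hBne K₂) hε2.ne')
    calc B (K₁ ∪ K₂) ≤ A (G₁.1 ∪ G₂.1) :=
          hBle _ _ (G₁.2.1.union G₂.2.1) (union_subset_union G₁.2.2 G₂.2.2)
      _ ≤ A G₁.1 + A G₂.1 := hAunion _ _
      _ ≤ (B K₁ + ε/2) + (B K₂ + ε/2) := add_le_add hG₁.le hG₂.le
      _ = B K₁ + B K₂ + (ε/2 + ε/2) := by ring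
      _ = B K₁ + B K₂ + ε := by rw [ENNReal.add_halves]
  -- the content on compacts
  set κ : Content (X × Y) :=
  { toFun := fun K => (B K).toNNReal
    mono' := fun K₁ K₂ h => ENNReal.toNNReal_mono (hBne _) (hBmono _ _ h)
    sup_le' := by
      intro K₁ K₂
      have key : B ((K₁ ⊔ K₂ : Compacts (X × Y)) : Set (X × Y)) ≤ B K₁ + B K₂ := by
        rw [Compacts.coe_sup]
        exact hBsub _ _
      have h2 : ((B K₁ + B K₂).toNNReal : ℝ≥0) = (B K₁).toNNReal + (B K₂).toNNReal :=
        ENNReal.toNNReal_add (hBne _) (hBne _)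
      rw [← h2]
      exact ENNReal.toNNReal_mono (ENNReal.add_ne_top.2 ⟨hBne _, hBne _⟩) key
    sup_disjoint' := by
      intro K₁ K₂ hdisj _h1 _h2
      obtain ⟨V₁, V₂, hV₁, hV₂, hKV₁, hKV₂, hVd⟩ :=
        SeparatedNhds.of_isCompact_isCompact K₁.2 K₂.2 hdisj
      have hge : B K₁ + B K₂ ≤ B ((K₁ ⊔ K₂ : Compacts (X × Y)) : Set (X × Y)) := by
        refine le_iInf fun G => ?_
        obtain ⟨G, hG, hKG⟩ := G
        rw [Compacts.coe_sup] at hKG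
        have hsub1 : (K₁ : Set (X × Y)) ⊆ G ∩ V₁ :=
          subset_inter (subset_union_left.trans hKG) hKV₁
        have hsub2 : (K₂ : Set (X × Y)) ⊆ G ∩ V₂ :=
          subset_inter (subset_union_right.trans hKG) hKV₂
        calc B K₁ + B K₂ ≤ A (G ∩ V₁) + A (G ∩ V₂) :=
              add_le_add (hBle _ _ (hG.inter hV₁) hsub1) (hBle _ _ (hG.inter hV₂) hsub2)
          _ = A ((G ∩ V₁) ∪ (G ∩ V₂)) := by
              refine (hAadd _ _ ?_ ((hG.inter hV₂).measurableSet)).symm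
              exact (hVd.mono inter_subset_right inter_subset_right)
          _ ≤ A G := hAmono (union_subset inter_subset_left inter_subset_left)
      have hle : B ((K₁ ⊔ K₂ : Compacts (X × Y)) : Set (X × Y)) ≤ B K₁ + B K₂ := by
        rw [Compacts.coe_sup]; exact hBsub _ _
      have heq : B ((K₁ ⊔ K₂ : Compacts (X × Y)) : Set (X × Y)) = B K₁ + B K₂ :=
        le_antisymm hle hge
      show (B ((K₁ ⊔ K₂ : Compacts (X × Y)) : Set (X × Y))).toNNReal = _
      rw [heq, ENNReal.toNNReal_add (hBne _) (hBne _)] } with hκdef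
  have hκ : ∀ K : Compacts (X × Y), (κ K : ℝ≥0∞) = B K := by
    intro K
    show ((B (K : Set (X × Y))).toNNReal : ℝ≥0∞) = B K
    exact ENNReal.coe_toNNReal (hBne _)
  set μ₀ : Measure (X × Y) := κ.measure with hμ₀def
  have hμ₀open : ∀ G : Set (X × Y), IsOpen G → μ₀ G ≤ A G := by
    intro G hG
    rw [show μ₀ G = κ.outerMeasure G from κ.measure_apply hG.measurableSet,
      show κ.outerMeasure G = κ.innerContent ⟨G, hG⟩ from κ.outerMeasure_opens ⟨G, hG⟩]
    refine iSup₂_le fun K hKG => ?_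
    rw [hκ K]
    exact hBle _ _ hG hKG
  -- tightness
  have htight : ∀ ε : ℝ≥0∞, 0 < ε → ∃ K : Set (X × Y), IsCompact K ∧ ∀ n, π n Kᶜ ≤ ε := by
    intro ε hε
    have hε2 : (0:ℝ≥0∞) < ε/2 := ENNReal.div_pos hε.ne' ENNReal.ofNat_ne_top
    obtain ⟨K₁, hK₁c, hK₁⟩ := stmt6_exists_isCompact_measure_compl_le ν hε2
    obtain ⟨K₂, hK₂c, hK₂⟩ := stmt6_exists_isCompact_measure_compl_le σ hε2
    refine ⟨K₁ ×ˢ K₂, hK₁c.prod hK₂c, fun n => ?_⟩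
    have hsub : (K₁ ×ˢ K₂)ᶜ ⊆ (Prod.fst ⁻¹' K₁ᶜ) ∪ (Prod.snd ⁻¹' K₂ᶜ) := by
      intro q hq
      rw [Set.mem_compl_iff, Set.mem_prod, not_and_or] at hq
      exact hq.imp (fun h => h) (fun h => h)
    refine (measure_mono hsub).trans ((measure_union_le _ _).trans ?_)
    have e1 : π n (Prod.fst ⁻¹' K₁ᶜ) = ν K₁ᶜ := by
      rw [← hπf n, Measure.fst_apply hK₁c.isClosed.measurableSet.compl]
    have e2 : π n (Prod.snd ⁻¹' K₂ᶜ) = σ K₂ᶜ := by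
      rw [← hπs n, Measure.snd_apply hK₂c.isClosed.measurableSet.compl]
    rw [e1, e2]
    calc ν K₁ᶜ + σ K₂ᶜ ≤ ε/2 + ε/2 := add_le_add hK₁ hK₂
      _ = ε := ENNReal.add_halves ε
  have hμ₀univ : μ₀ univ = 1 := by
    refine le_antisymm ((hμ₀open univ isOpen_univ).trans hAuniv.le) ?_
    refine ENNReal.le_of_forall_pos_le_add fun ε hε _hfin => ?_
    obtain ⟨K, hKc, hK⟩ := htight ε (by exact_mod_cast hε)
    have hBK : (1:ℝ≥0∞) ≤ B K + ε := by
      have hG : ∀ G : {G : Set (X × Y) // IsOpen G ∧ K ⊆ G}, (1:ℝ≥0∞) ≤ A G.1 + ε := by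
        intro G
        have hn : ∀ n, (1:ℝ≥0∞) ≤ π n G.1 + ε := by
          intro n
          calc (1:ℝ≥0∞) = π n univ := (measure_univ).symm
            _ ≤ π n G.1 + π n Kᶜ := by
                refine le_trans (measure_mono ?_) (measure_union_le _ _)
                intro q _
                by_cases hq : q ∈ K
                · exact Or.inl (G.2.2 hq)
                · exact Or.inr hq
            _ ≤ π n G.1 + ε := add_le_add_right (hK n) _
        exact ge_of_tendsto ((hA G.1).add tendsto_const_nhds) (Eventually.of_forall hn)
      calc (1:ℝ≥0∞) ≤ ⨅ G : {G : Set (X × Y) // IsOpen G ∧ K ⊆ G}, (A G.1 + ε) :=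
            le_iInf hG
        _ = (⨅ G : {G : Set (X × Y) // IsOpen G ∧ K ⊆ G}, A G.1) + ε := by
            haveI : Nonempty {G : Set (X × Y) // IsOpen G ∧ K ⊆ G} :=
              ⟨⟨univ, isOpen_univ, subset_univ K⟩⟩
            rw [← ENNReal.iInf_add]
        _ = B K + ε := rfl
    refine hBK.trans (add_le_add_left ?_ (ε : ℝ≥0∞))
    have hKinner : (κ ⟨K, hKc⟩ : ℝ≥0∞) ≤ κ.innerContent ⟨univ, isOpen_univ⟩ :=
      κ.le_innerContent _ _ (subset_univ K)
    calc B K = (κ ⟨K, hKc⟩ : ℝ≥0∞) := (hκ ⟨K, hKc⟩).symm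
      _ ≤ κ.innerContent ⟨univ, isOpen_univ⟩ := hKinner
      _ = κ.outerMeasure univ := (κ.outerMeasure_opens ⟨univ, isOpen_univ⟩).symm
      _ = μ₀ univ := (κ.measure_apply MeasurableSet.univ).symm
  haveI hμ₀prob : IsProbabilityMeasure μ₀ := ⟨hμ₀univ⟩
  -- portmanteau
  have h_opens : ∀ G, IsOpen G → μ₀ G ≤ (U : Filter ℕ).liminf (fun n => π n G) := by
    intro G hG
    rw [(hA G).liminf_eq]
    exact hμ₀open G hG
  have h_null : ∀ E : Set (X × Y), μ₀ (frontier E) = 0 →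
      Tendsto (fun n => π n E) U (𝓝 (μ₀ E)) :=
    fun E hE => tendsto_measure_of_null_frontier h_opens hE
  -- marginals
  have hfst : μ₀.fst = ν := by
    apply stmt6_eq_of_nullFrontier
    intro A' hA' h0
    have hfr : μ₀ (frontier (Prod.fst ⁻¹' A')) = 0 := by
      refine le_antisymm (le_trans (measure_mono
        (continuous_fst.frontier_preimage_subset A')) ?_) (zero_le)
      rw [← Measure.fst_apply isClosed_frontier.measurableSet, h0]
    have ht := h_null _ hfr
    have hconst : Tendsto (fun n => π n (Prod.fst ⁻¹' A')) U (𝓝 (ν A')) := by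
      have he : ∀ n, π n (Prod.fst ⁻¹' A') = ν A' := fun n => by
        rw [← Measure.fst_apply hA', hπf n]
      exact tendsto_const_nhds.congr fun n => (he n).symm
    rw [Measure.fst_apply hA']
    exact tendsto_nhds_unique ht hconst
  have hsnd : μ₀.snd = σ := by
    apply stmt6_eq_of_nullFrontier
    intro A' hA' h0
    have hfr : μ₀ (frontier (Prod.snd ⁻¹' A')) = 0 := by
      refine le_antisymm (le_trans (measure_mono
        (continuous_snd.frontier_preimage_subset A')) ?_) (zero_le)
      rw [← Measure.snd_apply isClosed_frontier.measurableSet, h0]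
    have ht := h_null _ hfr
    have hconst : Tendsto (fun n => π n (Prod.snd ⁻¹' A')) U (𝓝 (σ A')) := by
      have he : ∀ n, π n (Prod.snd ⁻¹' A') = σ A' := fun n => by
        rw [← Measure.snd_apply hA', hπs n]
      exact tendsto_const_nhds.congr fun n => (he n).symm
    rw [Measure.snd_apply hA']
    exact tendsto_nhds_unique ht hconst
  -- the value of the integral
  have hIμ₀ : ∫ q, c q ∂μ₀ ≤ I := by
    refine le_of_forall_pos_le_add fun ε hε => ?_
    set η : ℝ := min (ε/2) 1 with hηdef
    have hη0 : 0 < η := lt_min (by positivity) one_pos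
    have hη1 : η ≤ 1 := min_le_right _ _
    have hη2 : 2*η ≤ ε := by
      have h := min_le_left (ε/2) 1
      rw [hηdef]
      linarith
    set N : ℕ := max 1 ⌈(2*M+2)/η⌉₊ with hNdef
    have hN0 : 0 < N := lt_of_lt_of_le one_pos (le_max_left _ _)
    have hN0' : (0:ℝ) < N := by exact_mod_cast hN0
    have hM2 : (0:ℝ) < 2*M+2 := by linarith
    set δ : ℝ := (2*M+2)/N with hδdef
    have hδ0 : 0 < δ := by positivity
    have hδη : δ ≤ η := by
      rw [hδdef, div_le_iff₀ hN0']
      have h1 : (2*M+2)/η ≤ (⌈(2*M+2)/η⌉₊ : ℝ) := Nat.le_ceil _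
      have h2 : ((⌈(2*M+2)/η⌉₊ : ℕ) : ℝ) ≤ (N:ℝ) := by
        exact_mod_cast Nat.le_max_right 1 ⌈(2*M+2)/η⌉₊
      rw [div_le_iff₀ hη0] at h1
      nlinarith
    set a : ℕ → ℝ := fun i => (-M-1) + i*δ with hadef
    have haN : a N = M+1 := by
      have hNne : (N:ℝ) ≠ 0 := hN0'.ne'
      simp only [hadef, hδdef]
      field_simp
      ring
    have hpick : ∀ i : ℕ, ∃ t, t ∈ Ioo (a i) (a (i+1)) ∧ μ₀ {q | c q = t} = 0 := by
      intro i
      have hD : Set.Countable {t : ℝ | 0 < μ₀ {q | c q = t}} :=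
        Measure.countable_meas_level_set_pos hcm
      by_contra hcon
      push_neg at hcon
      have hsub : Ioo (a i) (a (i+1)) ⊆ {t : ℝ | 0 < μ₀ {q | c q = t}} := by
        intro t ht
        exact pos_iff_ne_zero.2 (hcon t ht)
      have hvol : volume (Ioo (a i) (a (i+1))) = 0 :=
        le_antisymm ((measure_mono hsub).trans (hD.measure_zero volume).le) (zero_le)
      rw [Real.volume_Ioo] at hvol
      have hlen : a (i+1) - a i = δ := by simp only [hadef]; push_cast; ring
      rw [hlen, ENNReal.ofReal_eq_zero] at hvol
      linarith
    choose s hs1 hs2 using hpick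
    have hslt : ∀ i, s i < s (i+1) := fun i => lt_trans (hs1 i).2 (hs1 (i+1)).1
    have hsmono : StrictMono s := strictMono_nat_of_lt_succ hslt
    have hgap : ∀ i, s (i+1) ≤ s i + 2*δ := by
      intro i
      have h1 := (hs1 i).1
      have h2 := (hs1 (i+1)).2
      have h3 : a (i+1+1) = a i + 2*δ := by simp only [hadef]; push_cast; ring
      rw [h3] at h2
      linarith
    have hs0 : s 0 < -M := by
      have h2 := (hs1 0).2
      have h3 : a (0+1) = -M-1+δ := by simp only [hadef]; push_cast; ring
      rw [h3] at h2
      linarith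
    have hsN : M < s N := by
      have h1 := (hs1 N).1
      rw [haN] at h1
      linarith
    set E : ℕ → Set (X × Y) := fun i => c ⁻¹' (Ioc (s i) (s (i+1))) with hEdef
    have hEmeas : ∀ i, MeasurableSet (E i) := fun i => hcm measurableSet_Ioc
    have hEkey : ∀ i j : ℕ, i < j → Disjoint (E i) (E j) := by
      intro i j h
      refine Disjoint.preimage c ?_
      rw [Set.Ioc_disjoint_Ioc]
      calc min (s (i+1)) (s (j+1)) ≤ s (i+1) := min_le_left _ _
        _ ≤ s j := hsmono.monotone h
        _ ≤ max (s i) (s j) := le_max_right _ _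
    have hEdisj : Set.Pairwise ↑(Finset.range N) (Function.onFun Disjoint E) := by
      intro i _ j _ hij
      rcases hij.lt_or_gt with h | h
      · exact hEkey i j h
      · exact (hEkey j i h).symm
    have hEcover : ⋃ i ∈ Finset.range N, E i = univ := by
      refine eq_univ_of_forall fun q => ?_
      have hcq1 : s 0 < c q := lt_of_lt_of_le hs0 (abs_le.1 (hM q)).1
      have hcq2 : c q < s N := lt_of_le_of_lt (abs_le.1 (hM q)).2 hsN
      set i₀ := Nat.findGreatest (fun i => s i < c q) N with hi₀def
      have hspec : s i₀ < c q := by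
        rw [hi₀def]
        exact Nat.findGreatest_spec (P := fun i => s i < c q) (Nat.zero_le N) hcq1
      have hi₀N : i₀ ≤ N := Nat.findGreatest_le N
      have hi₀lt : i₀ < N := by
        rcases lt_or_eq_of_le hi₀N with h | h
        · exact h
        · exfalso
          rw [h] at hspec
          exact absurd hspec (not_lt.2 hcq2.le)
      have hnext : ¬ (s (i₀+1) < c q) :=
        Nat.findGreatest_is_greatest (Nat.lt_succ_self i₀) hi₀lt
      refine mem_biUnion (Finset.mem_range.2 hi₀lt) ?_
      exact Set.mem_preimage.2 (Set.mem_Ioc.2 ⟨hspec, not_lt.1 hnext⟩)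
    have hpart : ∀ (μ : Measure (X × Y)), IsProbabilityMeasure μ →
        ∀ (f : (X × Y) → ℝ), Integrable f μ →
        ∫ q, f q ∂μ = ∑ i ∈ Finset.range N, ∫ q in E i, f q ∂μ := by
      intro μ hμ f hf
      rw [← integral_biUnion_finset (Finset.range N) (fun i _ => hEmeas i) hEdisj
        (fun i _ => hf.integrableOn), hEcover, Measure.restrict_univ]
    have hup : ∫ q, c q ∂μ₀ ≤ ∑ i ∈ Finset.range N, (μ₀ (E i)).toReal * s (i+1) := by
      rw [hpart μ₀ hμ₀prob c (hint μ₀ hμ₀prob)]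
      refine Finset.sum_le_sum fun i _ => ?_
      have h1 : ∫ q in E i, c q ∂μ₀ ≤ ∫ _q in E i, s (i+1) ∂μ₀ := by
        refine setIntegral_mono_on (hint μ₀ hμ₀prob).integrableOn
          (integrableOn_const (measure_ne_top _ _)) (hEmeas i) ?_
        intro q hq
        exact hq.2
      rwa [setIntegral_const, smul_eq_mul] at h1
    have hlow : ∀ n, ∑ i ∈ Finset.range N, (π n (E i)).toReal * s (i+1)
        ≤ (∫ q, c q ∂(π n)) + 2*η := by
      intro n
      have hpc : ∫ q, (c q + 2*η) ∂(π n) = (∫ q, c q ∂(π n)) + 2*η := by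
        rw [integral_add (hint _ (hπp n)) (integrable_const _), integral_const]
        simp [measure_univ]
      have h2 : ∑ i ∈ Finset.range N, ∫ q in E i, (c q + 2*η) ∂(π n)
          = (∫ q, c q ∂(π n)) + 2*η := by
        have hintc : Integrable (fun q => c q + 2*η) (π n) :=
          (hint _ (hπp n)).add (integrable_const _)
        rw [← hpart (π n) (hπp n) (fun q => c q + 2*η) hintc, hpc]
      rw [← h2]
      refine Finset.sum_le_sum fun i _ => ?_
      have h3 : ∫ _q in E i, s (i+1) ∂(π n) ≤ ∫ q in E i, (c q + 2*η) ∂(π n) := by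
        refine setIntegral_mono_on (integrableOn_const (measure_ne_top _ _))
          ((hint _ (hπp n)).add (integrable_const _)).integrableOn (hEmeas i) ?_
        intro q hq
        have h4 : s i < c q := hq.1
        have h5 := hgap i
        linarith
      rwa [setIntegral_const, smul_eq_mul] at h3
    have hEnull : ∀ i, μ₀ (frontier (E i)) = 0 := by
      intro i
      have hclose : closure (E i) ⊆ c ⁻¹' (Icc (s i) (s (i+1))) :=
        closure_minimal (preimage_mono Ioc_subset_Icc_self) (isClosed_Icc.preimage hc)
      have hint' : c ⁻¹' (Ioo (s i) (s (i+1))) ⊆ interior (E i) :=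
        interior_maximal (preimage_mono Ioo_subset_Ioc_self) (isOpen_Ioo.preimage hc)
      have hfr : frontier (E i) ⊆ {q | c q = s i} ∪ {q | c q = s (i+1)} := by
        intro q hq
        have h1 : c q ∈ Icc (s i) (s (i+1)) := hclose hq.1
        have h2 : c q ∉ Ioo (s i) (s (i+1)) := fun hmem => hq.2 (hint' hmem)
        have h3 : c q ∈ ({s i, s (i+1)} : Set ℝ) := by
          rw [← Set.Icc_diff_Ioo_same (hslt i).le]
          exact ⟨h1, h2⟩
        rw [Set.mem_insert_iff, Set.mem_singleton_iff] at h3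
        rcases h3 with h | h
        · exact Or.inl h
        · exact Or.inr h
      refine le_antisymm ((measure_mono hfr).trans ((measure_union_le _ _).trans ?_)) (zero_le)
      rw [hs2 i, hs2 (i+1)]
      simp
    have hTi : ∀ i, Tendsto (fun n => (π n (E i)).toReal) U (𝓝 ((μ₀ (E i)).toReal)) := fun i =>
      (ENNReal.tendsto_toReal (measure_ne_top μ₀ _)).comp (h_null (E i) (hEnull i))
    have hsumT : Tendsto (fun n => ∑ i ∈ Finset.range N, (π n (E i)).toReal * s (i+1)) U
        (𝓝 (∑ i ∈ Finset.range N, (μ₀ (E i)).toReal * s (i+1))) :=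
      tendsto_finset_sum _ fun i _ => (hTi i).mul_const _
    have hUB : Tendsto (fun n => (∫ q, c q ∂(π n)) + 2*η) U (𝓝 (I + 2*η)) :=
      (hIlim.mono_left hUle).add_const _
    have hfinal : ∑ i ∈ Finset.range N, (μ₀ (E i)).toReal * s (i+1) ≤ I + 2*η :=
      le_of_tendsto_of_tendsto' hsumT hUB hlow
    calc ∫ q, c q ∂μ₀ ≤ ∑ i ∈ Finset.range N, (μ₀ (E i)).toReal * s (i+1) := hup
      _ ≤ I + 2*η := hfinal
      _ ≤ I + ε := by linarith
  exact ⟨μ₀, hμ₀prob, hfst, hsnd, fun π' h1 h2 h3 =>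
    hIμ₀.trans (csInf_le hSbdd (hmemS π' h1 h2 h3))⟩
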